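/- Let k be a field of characteristic 0, x ∈ k nonzero, and α, γ ∈ k with γ ≠ 0. Define χ: k[t,t⁻¹] → k by χ(f) = α·f(x) + γ·f'(x), and define the bilinear form B_χ(f,g) = χ(fg' − f'g). Then g lies in the radical of B_χ (i.e., B_χ(f,g) = 0 for all f ∈ k[t,t⁻¹]) if and only if g(x) = 0 and α·g'(x) + γ·g''(x) = 0. Moreover B_χ(f,g) = f(x)·(αg'(x)+γg''(x)) − g(x)·(αf'(x)+γf''(x)) for all f,g. -/

import Mathlib

/-- Formal derivative on Laurent polynomials, sending `tⁿ` to `n·tⁿ⁻¹`. -/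
noncomputable def lderiv {k : Type*} [CommRing k] (f : LaurentPolynomial k) : LaurentPolynomial k :=
  AddMonoidAlgebra.ofCoeff (Finsupp.sum f.coeff fun n a => Finsupp.single (n - 1) ((n : k) * a))

/-- Evaluation of a Laurent polynomial at a point `x` (of a field). -/
noncomputable def lev {k : Type*} [Field k] (x : k) (f : LaurentPolynomial k) : k :=
  Finsupp.sum f.coeff fun n a => a * x ^ n

/-- The local function `χ = χ_{x;α,γ} : f ↦ α·f(x) + γ·f'(x)` on `k[t,t⁻¹]`. -/
noncomputable def chiLoc {k : Type*} [Field k] (x α γ : k) (f : LaurentPolynomial k) : k :=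
  α * lev x f + γ * lev x (lderiv f)

/-- The associated bilinear form `B_χ(f,g) = χ(fg' − f'g)`. -/
noncomputable def Bchi {k : Type*} [Field k] (x α γ : k) (f g : LaurentPolynomial k) : k :=
  chiLoc x α γ (f * lderiv g - lderiv f * g)


section AuxLemmas

variable {k : Type*} [Field k]

lemma lderiv_single (n : ℤ) (a : k) :
    lderiv (AddMonoidAlgebra.single n a : LaurentPolynomial k) = AddMonoidAlgebra.single (n-1) ((n:k)*a) := by
  unfold lderiv
  rw [AddMonoidAlgebra.coeff_single, Finsupp.sum_single_index]
  all_goals simp only [AddMonoidAlgebra.ofCoeff_single, mul_zero, Finsupp.single_zero]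

lemma lderiv_add (f g : LaurentPolynomial k) : lderiv (f+g) = lderiv f + lderiv g := by
  unfold lderiv
  rw [AddMonoidAlgebra.coeff_add, Finsupp.sum_add_index] <;> intros <;> simp [mul_add, AddMonoidAlgebra.ofCoeff_add]

lemma lev_single (x : k) (n : ℤ) (a : k) :
    lev x (AddMonoidAlgebra.single n a : LaurentPolynomial k) = a * x ^ n := by
  unfold lev; rw [AddMonoidAlgebra.coeff_single, Finsupp.sum_single_index]; simp

lemma lev_add (x : k) (f g : LaurentPolynomial k) : lev x (f+g) = lev x f + lev x g := by
  unfold lev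
  rw [AddMonoidAlgebra.coeff_add, Finsupp.sum_add_index] <;> intros <;> simp [add_mul]

lemma lev_zero (x : k) : lev x (0 : LaurentPolynomial k) = 0 := by unfold lev; simp
lemma lderiv_zero : lderiv (0 : LaurentPolynomial k) = 0 := by unfold lderiv; simp

lemma single_mul (m n : ℤ) (a b : k) :
    (AddMonoidAlgebra.single m a : LaurentPolynomial k) * AddMonoidAlgebra.single n b =
      AddMonoidAlgebra.single (m+n) (a*b) :=
  AddMonoidAlgebra.single_mul_single ..

lemma lderiv_mul (f g : LaurentPolynomial k) :
    lderiv (f * g) = f * lderiv g + lderiv f * g := by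
  induction f using AddMonoidAlgebra.induction_linear with
  | zero => simp [lderiv_zero]
  | add p q hp hq => rw [add_mul, lderiv_add, hp, hq, lderiv_add]; ring
  | single m a =>
    induction g using AddMonoidAlgebra.induction_linear with
    | zero => simp [lderiv_zero]
    | add p q hp hq => rw [mul_add, lderiv_add, hp, hq, lderiv_add]; ring
    | single n b =>
      rw [single_mul, lderiv_single, lderiv_single, lderiv_single, single_mul, single_mul]
      rw [show m + n - 1 = m + (n-1) by ring, show m - 1 + n = m + (n-1) by ring,
        ← AddMonoidAlgebra.single_add (m + (n-1))]
      congr 1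
      push_cast; ring

lemma lev_mul (x : k) (hx : x ≠ 0) (f g : LaurentPolynomial k) :
    lev x (f * g) = lev x f * lev x g := by
  induction f using AddMonoidAlgebra.induction_linear with
  | zero => simp [lev_zero]
  | add p q hp hq => rw [add_mul, lev_add, hp, hq, lev_add]; ring
  | single m a =>
    induction g using AddMonoidAlgebra.induction_linear with
    | zero => simp [lev_zero]
    | add p q hp hq => rw [mul_add, lev_add, hp, hq, lev_add]; ring
    | single n b =>
      rw [single_mul, lev_single, lev_single, lev_single, zpow_add₀ hx]; ring

lemma lev_sub (x : k) (f g : LaurentPolynomial k) : lev x (f - g) = lev x f - lev x g := by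
  have h : lev x (f - g) + lev x g = lev x f := by rw [← lev_add]; simp
  exact eq_sub_of_add_eq h

lemma lderiv_sub (f g : LaurentPolynomial k) : lderiv (f - g) = lderiv f - lderiv g := by
  have h : lderiv (f - g) + lderiv g = lderiv f := by rw [← lderiv_add]; simp
  exact eq_sub_of_add_eq h

end AuxLemmas

/-- For `x ≠ 0`, `γ ≠ 0` and `χ(f) = α f(x) + γ f'(x)`:  `g` lies in the radical of
`B_χ(f,g) = χ(fg' − f'g)` iff `g(x) = 0` and `α g'(x) + γ g''(x) = 0`; moreover
`B_χ(f,g) = f(x)(αg'(x)+γg''(x)) − g(x)(αf'(x)+γf''(x))` for all `f, g`. -/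
theorem radical_Bchi_gamma_ne_zero {k : Type*} [Field k] [CharZero k]
    (x α γ : k) (hx : x ≠ 0) (hγ : γ ≠ 0) :
    (∀ g : LaurentPolynomial k,
      (∀ f : LaurentPolynomial k, Bchi x α γ f g = 0) ↔
        (lev x g = 0 ∧ α * lev x (lderiv g) + γ * lev x (lderiv (lderiv g)) = 0)) ∧
    (∀ f g : LaurentPolynomial k,
      Bchi x α γ f g =
        lev x f * (α * lev x (lderiv g) + γ * lev x (lderiv (lderiv g))) -
        lev x g * (α * lev x (lderiv f) + γ * lev x (lderiv (lderiv f)))) := by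
  have part2 : ∀ f g : LaurentPolynomial k,
      Bchi x α γ f g =
        lev x f * (α * lev x (lderiv g) + γ * lev x (lderiv (lderiv g))) -
        lev x g * (α * lev x (lderiv f) + γ * lev x (lderiv (lderiv f))) := by
    intro f g
    unfold Bchi chiLoc
    rw [lderiv_sub, lderiv_mul, lderiv_mul]
    simp only [lev_sub, lev_add, lev_mul x hx]
    ring
  refine ⟨fun g => ⟨fun h => ?_, fun ⟨h1, h2⟩ f => by rw [part2, h1, h2]; ring⟩, part2⟩
  have h0 := h (AddMonoidAlgebra.single 0 1)
  have h1 := h (AddMonoidAlgebra.single 1 1)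
  have h2 := h (AddMonoidAlgebra.single 2 1)
  rw [part2] at h0 h1 h2
  simp only [lev_single, lderiv_single, lderiv_zero, lev_zero, Int.cast_zero, Int.cast_one,
    Int.cast_two, zpow_two, zero_mul, one_mul, mul_one, AddMonoidAlgebra.single_zero, zpow_zero,
    zpow_one] at h0 h1 h2
  norm_num at h0 h1 h2
  have hA : α * lev x (lderiv g) + γ * lev x (lderiv (lderiv g)) = 0 := by
    linear_combination h0
  refine ⟨?_, hA⟩
  have ha : lev x g * α = 0 := by linear_combination x * hA - h1
  have hb : lev x g * γ = 0 := by linear_combination (x^2/2) * hA - h2/2 - x * ha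
  exact (mul_eq_zero.mp hb).resolve_right hγ
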